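/- There exists a positive constant C (depending only on λ) such that for all squares R ⊂ R̃ ⊂ Q with Q ∈ D_m, R̃ ∈ D_n, R ∈ D_{n+1} and m < n, one has |S_{Q,R} − S_{Q,R̃}| ≤ C a_n. -/

import Mathlib

open MeasureTheory Filter Set Topology
open scoped ENNReal

noncomputable section

/-- Side length of generation-`n` squares: `s n = λ₁ ⋯ λₙ` (here `Λ k` is `λ_{k+1}`). -/
def sideLen (Λ : ℕ → ℝ) (n : ℕ) : ℝ := ∏ k ∈ Finset.range n, Λ k

/-- Lower-left corner of the generation-`n` square encoded by the word `w`. -/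
def cornerPt (Λ : ℕ → ℝ) (w : ℕ → Bool × Bool) (n : ℕ) : ℂ :=
  ∑ k ∈ Finset.range n,
    (((if (w k).1 then sideLen Λ k - sideLen Λ (k + 1) else 0 : ℝ) : ℂ) +
      ((if (w k).2 then sideLen Λ k - sideLen Λ (k + 1) else 0 : ℝ) : ℂ) * Complex.I)

/-- The (closed) generation-`n` square encoded by the word `w`. -/
def cSquare (Λ : ℕ → ℝ) (w : ℕ → Bool × Bool) (n : ℕ) : Set ℂ :=
  {z : ℂ | (cornerPt Λ w n).re ≤ z.re ∧ z.re ≤ (cornerPt Λ w n).re + sideLen Λ n ∧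
    (cornerPt Λ w n).im ≤ z.im ∧ z.im ≤ (cornerPt Λ w n).im + sideLen Λ n}

/-- The family `𝒟_n` of generation-`n` squares. -/
def genSq (Λ : ℕ → ℝ) (n : ℕ) : Set (Set ℂ) := {Q | ∃ w, Q = cSquare Λ w n}

/-- The planar Cantor set `K = ⋂ₙ ⋃ⱼ Qⱼⁿ`. -/
def cantorK (Λ : ℕ → ℝ) : Set ℂ := ⋂ n, ⋃ w : ℕ → Bool × Bool, cSquare Λ w n

/-- The linear density `a_n = 4^{-n}/s_n` at generation `n`. -/
def linDensity (Λ : ℕ → ℝ) (n : ℕ) : ℝ := 1 / (4 ^ n * sideLen Λ n)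

/-- `S_Q`: the martingale value at a square `Q`,
`S_Q = μ(Q)⁻¹ ∫_Q ∫_{K ∖ Q} (z-y)⁻¹ dμ(y) dμ(z)`. -/
def SQ (Λ : ℕ → ℝ) (μ : Measure ℂ) (Q : Set ℂ) : ℂ :=
  ⨍ z in Q, ∫ y in cantorK Λ \ Q, (z - y)⁻¹ ∂μ ∂μ

/-- `S_{Q,R}`: the relative martingale started at `Q`, evaluated at `R ⊆ Q`,
`S_{Q,R} = μ(R)⁻¹ ∫_R ∫_{Q ∖ R} (z-y)⁻¹ dμ(y) dμ(z)`. -/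
def Srel (μ : Measure ℂ) (Q R : Set ℂ) : ℂ :=
  ⨍ z in R, ∫ y in Q \ R, (z - y)⁻¹ ∂μ ∂μ

section Aux
variable {Λ : ℕ → ℝ} {lam : ℝ} {w u v : ℕ → Bool × Bool} {m n k : ℕ}

lemma sideLen_succ (n : ℕ) : sideLen Λ (n + 1) = sideLen Λ n * Λ n :=
  Finset.prod_range_succ _ _

lemma sideLen_pos (hΛ : ∀ i, 1 / 4 ≤ Λ i) (n : ℕ) : 0 < sideLen Λ n :=
  Finset.prod_pos fun i _ => lt_of_lt_of_le (by norm_num) (hΛ i)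

lemma sideLen_le_pow (hΛ : ∀ i, 1 / 4 ≤ Λ i) (hΛ2 : ∀ i, Λ i ≤ lam) (h : k ≤ n) :
    sideLen Λ n ≤ sideLen Λ k * lam ^ (n - k) := by
  obtain ⟨d, rfl⟩ := Nat.exists_eq_add_of_le h
  clear h
  induction d with
  | zero => simp
  | succ d ih =>
    have h4 : (0:ℝ) < 1/4 := by norm_num
    have hlam0 : (0:ℝ) ≤ lam := le_trans (by norm_num) (le_trans (hΛ 0) (hΛ2 0))
    have := sideLen_pos hΛ (k + d)
    calc sideLen Λ (k + (d+1)) = sideLen Λ (k + d) * Λ (k+d) := by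
          rw [← sideLen_succ]; ring_nf
      _ ≤ (sideLen Λ k * lam ^ d) * lam := by
          have ih' : sideLen Λ (k + d) ≤ sideLen Λ k * lam ^ d := by simpa using ih
          apply mul_le_mul ih' (hΛ2 _) (le_trans (le_of_lt h4) (hΛ _)) _
          have := sideLen_pos hΛ k
          positivity
      _ = sideLen Λ k * lam ^ (k + (d+1) - k) := by
          simp [pow_succ, mul_assoc]
  
lemma sideLen_anti (hΛ : ∀ i, 1 / 4 ≤ Λ i) (hΛ2 : ∀ i, Λ i ≤ lam) (hlam : lam < 1/2)
    (h : k ≤ n) : sideLen Λ n ≤ sideLen Λ k := by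
  calc sideLen Λ n ≤ sideLen Λ k * lam ^ (n - k) := sideLen_le_pow hΛ hΛ2 h
    _ ≤ sideLen Λ k * 1 := by
        apply mul_le_mul_of_nonneg_left _ (le_of_lt (sideLen_pos hΛ k))
        apply pow_le_one₀ (le_trans (le_trans (by norm_num) (hΛ 0)) (hΛ2 0)) (le_of_lt (by linarith))
    _ = sideLen Λ k := mul_one _

lemma cornerPt_re : (cornerPt Λ w n).re
    = ∑ k ∈ Finset.range n, (if (w k).1 then sideLen Λ k - sideLen Λ (k + 1) else 0) := by
  simp [cornerPt, Complex.re_sum]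

lemma cornerPt_im : (cornerPt Λ w n).im
    = ∑ k ∈ Finset.range n, (if (w k).2 then sideLen Λ k - sideLen Λ (k + 1) else 0) := by
  simp [cornerPt, Complex.im_sum]

lemma cSquare_congr (h : ∀ i, i < n → u i = v i) : cSquare Λ u n = cSquare Λ v n := by
  have : cornerPt Λ u n = cornerPt Λ v n := by
    unfold cornerPt
    exact Finset.sum_congr rfl fun i hi => by rw [h i (Finset.mem_range.1 hi)]
  unfold cSquare; rw [this]

lemma cSquare_measurableSet : MeasurableSet (cSquare Λ w n) := by
  have : cSquare Λ w n = (Complex.measurableEquivRealProd ⁻¹'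
    (Set.Icc (cornerPt Λ w n).re ((cornerPt Λ w n).re + sideLen Λ n) ×ˢ
     Set.Icc (cornerPt Λ w n).im ((cornerPt Λ w n).im + sideLen Λ n))) := by
    ext z
    simp [cSquare, Complex.measurableEquivRealProd, Set.mem_Icc, and_assoc]
    tauto
  rw [this]
  exact (measurableSet_Icc.prod measurableSet_Icc).preimage
    Complex.measurableEquivRealProd.measurable
end Aux

section Geom
variable {Λ : ℕ → ℝ} {lam : ℝ} {w u v : ℕ → Bool × Bool} {m n k j : ℕ}

lemma cornerPt_re_succ : (cornerPt Λ w (n+1)).re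
    = (cornerPt Λ w n).re + (if (w n).1 then sideLen Λ n - sideLen Λ (n+1) else 0) := by
  rw [cornerPt_re, cornerPt_re, Finset.sum_range_succ]

lemma cornerPt_im_succ : (cornerPt Λ w (n+1)).im
    = (cornerPt Λ w n).im + (if (w n).2 then sideLen Λ n - sideLen Λ (n+1) else 0) := by
  rw [cornerPt_im, cornerPt_im, Finset.sum_range_succ]

variable (hΛ : ∀ i, 1 / 4 ≤ Λ i) (hΛ2 : ∀ i, Λ i ≤ lam) (hlam : lam < 1/2)

include hΛ hΛ2 hlam

lemma sideLen_succ_le : sideLen Λ (n+1) ≤ sideLen Λ n :=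
  sideLen_anti hΛ hΛ2 hlam (Nat.le_succ n)

lemma cSquare_succ_subset : cSquare Λ w (n+1) ⊆ cSquare Λ w n := by
  intro z hz
  obtain ⟨h1, h2, h3, h4⟩ := hz
  rw [cornerPt_re_succ] at h1 h2
  rw [cornerPt_im_succ] at h3 h4
  have hs := sideLen_succ_le hΛ hΛ2 hlam (n := n)
  have hs0 := sideLen_pos hΛ (n+1)
  constructor
  · split_ifs at h1 with h <;> linarith
  constructor
  · split_ifs at h2 with h <;> linarith
  constructor
  · split_ifs at h3 with h <;> linarith
  · split_ifs at h4 with h <;> linarith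

lemma cSquare_antitone (h : k ≤ n) : cSquare Λ w n ⊆ cSquare Λ w k := by
  obtain ⟨d, rfl⟩ := Nat.exists_eq_add_of_le h
  clear h
  induction d with
  | zero => exact subset_rfl
  | succ d ih =>
    have : k + (d+1) = (k+d) + 1 := rfl
    rw [this]
    exact (cSquare_succ_subset hΛ hΛ2 hlam).trans ih

omit hlam in
lemma sep_coord {P x y s s' t : ℝ} (hs : 0 < s) (hs' : s' = s * t) (ht : t ≤ lam)
    (hx : P + (s - s') ≤ x) (hy : y ≤ P + s') : (1 - 2*lam) * s ≤ x - y := by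
  have h4 := hΛ 0
  nlinarith

omit hΛ hΛ2 hlam in
lemma cornerPt_congr (h : ∀ i, i < n → u i = v i) : cornerPt Λ u n = cornerPt Λ v n := by
  unfold cornerPt
  exact Finset.sum_congr rfl fun i hi => by rw [h i (Finset.mem_range.1 hi)]

omit hlam in
lemma sep_abs {P x y s s' t : ℝ} (hs : 0 < s) (hs' : s' = s * t) (ht : t ≤ lam)
    (h : (P + (s - s') ≤ x ∧ y ≤ P + s') ∨ (P + (s - s') ≤ y ∧ x ≤ P + s')) :
    (1 - 2*lam) * s ≤ |x - y| := by
  rcases h with ⟨h1, h2⟩ | ⟨h1, h2⟩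
  · exact le_trans (sep_coord hΛ hΛ2 hs hs' ht h1 h2) (le_abs_self _)
  · rw [abs_sub_comm]
    exact le_trans (sep_coord hΛ hΛ2 hs hs' ht h1 h2) (le_abs_self _)

lemma sep_sibling {z y : ℂ} (hpre : ∀ i, i < j → u i = v i) (hne : u j ≠ v j)
    (hz : z ∈ cSquare Λ u (j+1)) (hy : y ∈ cSquare Λ v (j+1)) :
    (1 - 2*lam) * sideLen Λ j ≤ ‖z - y‖ := by
  have hcor : cornerPt Λ u j = cornerPt Λ v j := cornerPt_congr hpre
  have hs := sideLen_pos hΛ j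
  have hs' : sideLen Λ (j+1) = sideLen Λ j * Λ j := sideLen_succ j
  obtain ⟨hz1, hz2, hz3, hz4⟩ := hz
  obtain ⟨hy1, hy2, hy3, hy4⟩ := hy
  rw [cornerPt_re_succ] at hz1 hz2 hy1 hy2
  rw [cornerPt_im_succ] at hz3 hz4 hy3 hy4
  rw [hcor] at hz1 hz2 hz3 hz4
  by_cases h1 : (u j).1 = (v j).1
  · have h2 : (u j).2 ≠ (v j).2 := fun h2 => hne (Prod.ext h1 h2)
    have key : (1 - 2*lam) * sideLen Λ j ≤ |z.im - y.im| := by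
      apply sep_abs hΛ hΛ2 hs hs' (hΛ2 j)
      rcases hu : (u j).2 <;> rcases hv : (v j).2 <;>
        rw [hu] at hz3 hz4 h2 <;> rw [hv] at hy3 hy4 h2 <;>
        simp only [Bool.false_eq_true, if_false, if_true, add_zero] at hz3 hz4 hy3 hy4 h2
      · exact absurd rfl h2
      · exact Or.inr ⟨hy3, hz4⟩
      · exact Or.inl ⟨hz3, hy4⟩
      · exact absurd rfl h2
    calc (1 - 2*lam) * sideLen Λ j ≤ |z.im - y.im| := key
      _ = |(z - y).im| := by simp [Complex.sub_im]
      _ ≤ ‖z - y‖ := Complex.abs_im_le_norm _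
  · have key : (1 - 2*lam) * sideLen Λ j ≤ |z.re - y.re| := by
      apply sep_abs hΛ hΛ2 hs hs' (hΛ2 j)
      rcases hu : (u j).1 <;> rcases hv : (v j).1 <;>
        rw [hu] at hz1 hz2 h1 <;> rw [hv] at hy1 hy2 h1 <;>
        simp only [Bool.false_eq_true, if_false, if_true, add_zero] at hz1 hz2 hy1 hy2 h1
      · exact absurd trivial h1
      · exact Or.inr ⟨hy1, hz2⟩
      · exact Or.inl ⟨hz1, hy2⟩
      · exact absurd trivial h1
    calc (1 - 2*lam) * sideLen Λ j ≤ |z.re - y.re| := key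
      _ = |(z - y).re| := by simp [Complex.sub_re]
      _ ≤ ‖z - y‖ := Complex.abs_re_le_norm _

end Geom

section Geom2
variable {Λ : ℕ → ℝ} {lam : ℝ} {w u v : ℕ → Bool × Bool} {m n k j : ℕ}
variable (hΛ : ∀ i, 1 / 4 ≤ Λ i) (hΛ2 : ∀ i, Λ i ≤ lam) (hlam : lam < 1/2)

include hΛ hΛ2 hlam

omit hΛ2 hlam in
lemma cornerPt_mem : cornerPt Λ w n ∈ cSquare Λ w n := by
  have hs := (sideLen_pos hΛ n).le
  exact ⟨le_refl _, by linarith, le_refl _, by linarith⟩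

lemma word_align {n' : ℕ} (h : cSquare Λ u n' ⊆ cSquare Λ v n) (hn : n ≤ n') :
    ∀ i, i < n → u i = v i := by
  by_contra hcon
  push_neg at hcon
  have hex : ∃ i, i < n ∧ u i ≠ v i := hcon
  set j := Nat.find hex with hj
  obtain ⟨hjn, hjne⟩ := Nat.find_spec hex
  have hpre : ∀ i, i < j → u i = v i := fun i hi => by
    by_contra hne
    exact absurd (And.intro (lt_trans hi hjn) hne) (Nat.find_min hex hi)
  set z := cornerPt Λ u n' with hz
  have hz1 : z ∈ cSquare Λ u (j+1) :=
    cSquare_antitone hΛ hΛ2 hlam (by omega) (cornerPt_mem hΛ)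
  have hz2 : z ∈ cSquare Λ v (j+1) :=
    cSquare_antitone hΛ hΛ2 hlam (by omega) (h (cornerPt_mem hΛ))
  have := sep_sibling hΛ hΛ2 hlam hpre hjne hz1 hz2
  rw [sub_self, norm_zero] at this
  have hsj := sideLen_pos hΛ j
  nlinarith

lemma sep_cantorK (hkn : k < n) {z y : ℂ} (hz : z ∈ cSquare Λ u n) (hy : y ∈ cantorK Λ)
    (hy' : y ∉ cSquare Λ u (k+1)) : (1 - 2*lam) * sideLen Λ k ≤ ‖z - y‖ := by
  have hyk : y ∈ ⋃ w : ℕ → Bool × Bool, cSquare Λ w (k+1) := Set.mem_iInter.1 hy (k+1)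
  obtain ⟨t, hyt⟩ := Set.mem_iUnion.1 hyk
  have hnall : ¬ ∀ i, i < k+1 → u i = t i := fun hall =>
    hy' (by rw [cSquare_congr hall]; exact hyt)
  push_neg at hnall
  have hex : ∃ i, i < k+1 ∧ u i ≠ t i := hnall
  set j := Nat.find hex with hj
  obtain ⟨hjk, hjne⟩ := Nat.find_spec hex
  have hpre : ∀ i, i < j → u i = t i := fun i hi => by
    by_contra hne
    exact absurd (And.intro (lt_of_lt_of_le hi (by omega)) hne) (Nat.find_min hex hi)
  have hz1 : z ∈ cSquare Λ u (j+1) := cSquare_antitone hΛ hΛ2 hlam (by omega) hz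
  have hy1 : y ∈ cSquare Λ t (j+1) := cSquare_antitone hΛ hΛ2 hlam (by omega) hyt
  have hsep := sep_sibling hΛ hΛ2 hlam hpre hjne hz1 hy1
  calc (1 - 2*lam) * sideLen Λ k ≤ (1 - 2*lam) * sideLen Λ j :=
        mul_le_mul_of_nonneg_left (sideLen_anti hΛ hΛ2 hlam (by omega)) (by linarith)
    _ ≤ ‖z - y‖ := hsep

omit hΛ hΛ2 hlam in
lemma cantorK_measurableSet : MeasurableSet (cantorK Λ) := by
  apply MeasurableSet.iInter
  intro n
  have : (⋃ w : ℕ → Bool × Bool, cSquare Λ w n)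
      = ⋃ p : Fin n → Bool × Bool,
          cSquare Λ (fun i => if h : i < n then p ⟨i, h⟩ else (false, false)) n := by
    ext z
    simp only [Set.mem_iUnion]
    constructor
    · rintro ⟨w, hw⟩
      refine ⟨fun i => w i, ?_⟩
      rwa [cSquare_congr (u := fun i => if h : i < n then w i else (false, false))
        (v := w) (fun i hi => by simp [hi])]
    · rintro ⟨p, hp⟩
      exact ⟨_, hp⟩
  rw [this]
  exact MeasurableSet.iUnion fun p => cSquare_measurableSet

end Geom2

section Anal
variable {Λ : ℕ → ℝ} {lam : ℝ} {u : ℕ → Bool × Bool} {m n k : ℕ} {μ : Measure ℂ}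
variable (hΛ : ∀ i, 1 / 4 ≤ Λ i) (hΛ2 : ∀ i, Λ i ≤ lam) (hlam : lam < 1/2)
variable [IsProbabilityMeasure μ] (hμK : μ (cantorK Λ) = 1)

lemma myGeomLe {r : ℝ} (h0 : 0 ≤ r) (h1 : r < 1) (N : ℕ) :
    ∑ i ∈ Finset.range N, r^i ≤ (1-r)⁻¹ := by
  have h2 : (0:ℝ) < 1 - r := by linarith
  rw [geom_sum_eq (by intro h; rw [h] at h1; linarith) N]
  have e : (r^N - 1)/(r - 1) = (1 - r^N)/(1 - r) := by
    rw [← neg_div_neg_eq]; ring_nf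
  rw [e, inv_eq_one_div, div_le_div_iff₀ h2 h2]
  nlinarith [pow_nonneg h0 N]

lemma sum_pow_sub_le {r : ℝ} (h0 : 0 ≤ r) (h1 : r < 1) :
    ∑ k ∈ Finset.Ico m n, r^(n-k) ≤ (1-r)⁻¹ := by
  calc ∑ k ∈ Finset.Ico m n, r^(n-k)
      ≤ ∑ k ∈ Finset.Ico 0 n, r^(n-k) := by
        apply Finset.sum_le_sum_of_subset_of_nonneg
        · exact Finset.Ico_subset_Ico (Nat.zero_le m) le_rfl
        · intro i _ _; positivity
    _ = ∑ k ∈ Finset.range n, r^(n-k) := by rw [← Finset.range_eq_Ico]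
    _ = ∑ j ∈ Finset.range n, r^(j+1) := by
        rw [← Finset.sum_range_reflect]
        apply Finset.sum_congr rfl
        intro j hj
        have h : n - (n - 1 - j) = j + 1 := by
          have := Finset.mem_range.1 hj; omega
        rw [h]
    _ ≤ ∑ j ∈ Finset.range n, r^j := by
        apply Finset.sum_le_sum
        intro j _
        exact pow_le_pow_of_le_one h0 h1.le (Nat.le_succ j)
    _ ≤ (1-r)⁻¹ := myGeomLe h0 h1 n

lemma ptw_inv_sub {z z' y : ℂ} {b : ℝ} (hb : 0 < b) (h1 : b ≤ ‖z - y‖) (h2 : b ≤ ‖z' - y‖) :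
    ‖(z - y)⁻¹ - (z' - y)⁻¹‖ ≤ ‖z - z'‖ / b^2 := by
  have hz : z - y ≠ 0 := by intro h; rw [h, norm_zero] at h1; linarith
  have hz' : z' - y ≠ 0 := by intro h; rw [h, norm_zero] at h2; linarith
  rw [inv_sub_inv hz hz']
  have e : z' - y - (z - y) = z' - z := by ring
  rw [e, norm_div, norm_mul, norm_sub_rev]
  apply div_le_div₀ (norm_nonneg _) le_rfl (by positivity)
  nlinarith [norm_nonneg (z - y), norm_nonneg (z' - y)]

include hμK

omit hΛ hΛ2 hlam in
lemma aeK : ∀ᵐ y ∂μ, y ∈ cantorK Λ := by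
  rw [ae_iff]
  have h : {y | ¬ y ∈ cantorK Λ} = (cantorK Λ)ᶜ := rfl
  rw [h, measure_compl cantorK_measurableSet (measure_ne_top μ _), hμK, measure_univ]
  simp

omit hΛ hΛ2 hlam in
lemma key_intOn {z : ℂ} {S : Set ℂ} (hS : MeasurableSet S) {b : ℝ} (hb : 0 < b)
    (hsep : ∀ y ∈ S, y ∈ cantorK Λ → b ≤ ‖z - y‖) :
    IntegrableOn (fun y => (z - y)⁻¹) S μ := by
  apply Measure.integrableOn_of_bounded (M := b⁻¹) (measure_ne_top μ S)
    ((measurable_const.sub measurable_id).inv.aestronglyMeasurable)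
  filter_upwards [ae_restrict_mem hS, ae_restrict_of_ae (aeK hμK)] with y hyS hyK
  show ‖(z - y)⁻¹‖ ≤ b⁻¹
  rw [norm_inv]
  exact inv_anti₀ hb (hsep y hyS hyK)

omit hΛ hΛ2 hlam in
lemma key_norm {z : ℂ} {S : Set ℂ} (hS : MeasurableSet S) {b : ℝ} (hb : 0 < b)
    (hsep : ∀ y ∈ S, y ∈ cantorK Λ → b ≤ ‖z - y‖) :
    ‖∫ y in S, (z - y)⁻¹ ∂μ‖ ≤ b⁻¹ * (μ S).toReal := by
  apply norm_setIntegral_le_of_norm_le_const_ae' (measure_lt_top μ S)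
  filter_upwards [aeK hμK] with y hyK hyS
  rw [norm_inv]
  exact inv_anti₀ hb (hsep y hyS hyK)

omit hΛ hΛ2 hlam in
lemma key_norm_sub {z z' : ℂ} {S : Set ℂ} (hS : MeasurableSet S) {b : ℝ} (hb : 0 < b)
    (hsep : ∀ y ∈ S, y ∈ cantorK Λ → b ≤ ‖z - y‖ ∧ b ≤ ‖z' - y‖) :
    ‖∫ y in S, ((z - y)⁻¹ - (z' - y)⁻¹) ∂μ‖ ≤ (‖z - z'‖ / b^2) * (μ S).toReal := by
  apply norm_setIntegral_le_of_norm_le_const_ae' (measure_lt_top μ S)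
  filter_upwards [aeK hμK] with y hyK hyS
  exact ptw_inv_sub hb (hsep y hyS hyK).1 (hsep y hyS hyK).2

end Anal

section Anal2
variable {Λ : ℕ → ℝ} {lam : ℝ} {u : ℕ → Bool × Bool} {m n k : ℕ}
variable (hΛ : ∀ i, 1 / 4 ≤ Λ i) (hΛ2 : ∀ i, Λ i ≤ lam) (hlam : lam < 1/2)

include hΛ hΛ2 hlam

omit hΛ2 hlam in
lemma diam_bound {z z' : ℂ} (hz : z ∈ cSquare Λ u n) (hz' : z' ∈ cSquare Λ u n) :
    ‖z - z'‖ ≤ 2 * sideLen Λ n := by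
  obtain ⟨a1, a2, a3, a4⟩ := hz
  obtain ⟨b1, b2, b3, b4⟩ := hz'
  calc ‖z - z'‖ ≤ |(z - z').re| + |(z - z').im| := by
        simpa using Complex.norm_le_abs_re_add_abs_im (z - z')
    _ ≤ sideLen Λ n + sideLen Λ n := by
        apply add_le_add
        · rw [Complex.sub_re]; rw [abs_le]; constructor <;> linarith
        · rw [Complex.sub_im]; rw [abs_le]; constructor <;> linarith
    _ = 2 * sideLen Λ n := by ring

lemma shell_decomp (h : m ≤ n) :
    cSquare Λ u m \ cSquare Λ u n
      = ⋃ k ∈ Finset.Ico m n, (cSquare Λ u k \ cSquare Λ u (k+1)) := by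
  induction n, h using Nat.le_induction with
  | base => simp
  | succ n hmn ih =>
    rw [Nat.Ico_succ_right_eq_insert_Ico hmn, Finset.set_biUnion_insert, ← ih, union_comm]
    exact (Set.diff_union_diff_cancel (cSquare_antitone hΛ hΛ2 hlam hmn)
      (cSquare_succ_subset hΛ hΛ2 hlam)).symm

lemma shells_disj : Set.Pairwise ↑(Finset.Ico m n)
    (Function.onFun Disjoint fun k => cSquare Λ u k \ cSquare Λ u (k+1)) := by
  have key : ∀ k l : ℕ, k < l →
      Disjoint (cSquare Λ u k \ cSquare Λ u (k+1)) (cSquare Λ u l \ cSquare Λ u (l+1)) := by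
    intro k l hkl
    rw [Set.disjoint_left]
    rintro x ⟨_, hx2⟩ ⟨hx3, _⟩
    exact hx2 (cSquare_antitone hΛ hΛ2 hlam hkl hx3)
  intro k _ l _ hne
  rcases lt_or_gt_of_ne hne with h | h
  · exact key k l h
  · exact (key l k h).symm

lemma term_bound (hk : k < n) :
    2 * sideLen Λ n / ((1 - 2*lam) * sideLen Λ k)^2 * (1/4:ℝ)^k
      ≤ (2/(1 - 2*lam)^2) * linDensity Λ n * (4*lam^2)^(n-k) := by
  have h1 : sideLen Λ n ≤ sideLen Λ k * lam^(n-k) := sideLen_le_pow hΛ hΛ2 hk.le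
  have hsn := sideLen_pos hΛ n
  have hsk := sideLen_pos hΛ k
  have hc : (0:ℝ) < 1 - 2*lam := by linarith
  have hlam0 : (0:ℝ) < lam := lt_of_lt_of_le (by norm_num) (le_trans (hΛ 0) (hΛ2 0))
  set d := n - k with hd
  have hnd : n = k + d := by omega
  have key : sideLen Λ n / (sideLen Λ k)^2 ≤ lam^d * lam^d / sideLen Λ n := by
    rw [div_le_div_iff₀ (by positivity) hsn]
    nlinarith [pow_pos hlam0 d]
  have e1 : 2 * sideLen Λ n / ((1 - 2*lam) * sideLen Λ k)^2 * (1/4:ℝ)^k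
      = (2/(1 - 2*lam)^2) * ((1/4:ℝ)^k * (sideLen Λ n / (sideLen Λ k)^2)) := by
    field_simp
  have e2 : linDensity Λ n * (4*lam^2)^d
      = (1/4:ℝ)^k * (lam^d * lam^d / sideLen Λ n) := by
    unfold linDensity
    rw [hnd]
    rw [mul_pow (4:ℝ) (lam^2) d, pow_add (4:ℝ) k d]
    have hp : ((lam^2)^d : ℝ) = lam^d * lam^d := by
      rw [← pow_mul, two_mul, pow_add]
    rw [hp]
    have h4k : ((4:ℝ))^k ≠ 0 := by positivity
    have h4d : ((4:ℝ))^d ≠ 0 := by positivity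
    have hsn' : sideLen Λ (k+d) ≠ 0 := (sideLen_pos hΛ (k+d)).ne'
    rw [div_pow, one_pow]
    field_simp
  rw [e1, mul_assoc, e2]
  apply mul_le_mul_of_nonneg_left _ (by positivity)
  exact mul_le_mul_of_nonneg_left key (by positivity)

end Anal2

section Main
variable {Λ : ℕ → ℝ} {lam : ℝ} {u : ℕ → Bool × Bool} {m n : ℕ} {μ : Measure ℂ}
variable (hΛ : ∀ i, 1 / 4 ≤ Λ i) (hΛ2 : ∀ i, Λ i ≤ lam) (hlam : lam < 1/2)
variable [IsProbabilityMeasure μ] (hμK : μ (cantorK Λ) = 1)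
  (hμQ : ∀ (w : ℕ → Bool × Bool) (k : ℕ), μ (cSquare Λ w k) = (4 : ℝ≥0∞)⁻¹ ^ k)

include hμQ in
lemma muE_toReal (w : ℕ → Bool × Bool) (k : ℕ) :
    (μ (cSquare Λ w k)).toReal = (1/4:ℝ)^k := by
  rw [hμQ w k, ENNReal.toReal_pow, ENNReal.toReal_inv]
  norm_num

include hΛ hΛ2 hlam hμK hμQ

lemma Gdiff_bound (hmn : m < n) {z z' : ℂ}
    (hz : z ∈ cSquare Λ u n) (hz' : z' ∈ cSquare Λ u n) :
    ‖(∫ y in cSquare Λ u m \ cSquare Λ u n, (z - y)⁻¹ ∂μ)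
      - ∫ y in cSquare Λ u m \ cSquare Λ u n, (z' - y)⁻¹ ∂μ‖
      ≤ (2/((1 - 2*lam)^2 * (1 - 4*lam^2))) * linDensity Λ n := by
  have hc : (0:ℝ) < 1 - 2*lam := by linarith
  have hlam0 : (0:ℝ) < lam := lt_of_lt_of_le (by norm_num) (le_trans (hΛ 0) (hΛ2 0))
  have hr1 : 4*lam^2 < 1 := by nlinarith
  have hr0 : (0:ℝ) ≤ 4*lam^2 := by positivity
  obtain ⟨n', rfl⟩ : ∃ n', n = n' + 1 := ⟨n - 1, by omega⟩
  have hM : MeasurableSet (cSquare Λ u m \ cSquare Λ u (n'+1)) :=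
    cSquare_measurableSet.diff cSquare_measurableSet
  have hbig : ∀ w : ℂ, w ∈ cSquare Λ u (n'+1) →
      IntegrableOn (fun y => (w - y)⁻¹) (cSquare Λ u m \ cSquare Λ u (n'+1)) μ := by
    intro w hw
    apply key_intOn hμK hM (b := (1-2*lam) * sideLen Λ n')
      (by have := sideLen_pos hΛ n'; positivity)
    intro y hyS hyK
    exact sep_cantorK hΛ hΛ2 hlam (Nat.lt_succ_self n') hw hyK hyS.2
  rw [← integral_sub (hbig z hz) (hbig z' hz')]
  rw [shell_decomp hΛ hΛ2 hlam (le_of_lt hmn)]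
  have hsepk : ∀ k, k < n'+1 → ∀ (w : ℂ), w ∈ cSquare Λ u (n'+1) →
      ∀ y ∈ cSquare Λ u k \ cSquare Λ u (k+1), y ∈ cantorK Λ →
        (1-2*lam) * sideLen Λ k ≤ ‖w - y‖ := by
    intro k hk w hw y hyS hyK
    exact sep_cantorK hΛ hΛ2 hlam hk hw hyK hyS.2
  have hintk : ∀ k ∈ Finset.Ico m (n'+1), IntegrableOn (fun y => (z - y)⁻¹ - (z' - y)⁻¹)
      (cSquare Λ u k \ cSquare Λ u (k+1)) μ := by
    intro k hk
    have hkn : k < n'+1 := (Finset.mem_Ico.1 hk).2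
    have hbk : 0 < (1-2*lam) * sideLen Λ k := by have := sideLen_pos hΛ k; positivity
    exact (key_intOn hμK (cSquare_measurableSet.diff cSquare_measurableSet) hbk
      (fun y h1 h2 => hsepk k hkn z hz y h1 h2)).sub
      (key_intOn hμK (cSquare_measurableSet.diff cSquare_measurableSet) hbk
      (fun y h1 h2 => hsepk k hkn z' hz' y h1 h2))
  rw [integral_biUnion_finset (Finset.Ico m (n'+1))
    (fun i _ => cSquare_measurableSet.diff cSquare_measurableSet)
    (shells_disj hΛ hΛ2 hlam) hintk]
  calc ‖∑ k ∈ Finset.Ico m (n'+1),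
        ∫ y in cSquare Λ u k \ cSquare Λ u (k+1), ((z-y)⁻¹ - (z'-y)⁻¹) ∂μ‖
      ≤ ∑ k ∈ Finset.Ico m (n'+1),
        ‖∫ y in cSquare Λ u k \ cSquare Λ u (k+1), ((z-y)⁻¹ - (z'-y)⁻¹) ∂μ‖ :=
        norm_sum_le _ _
    _ ≤ ∑ k ∈ Finset.Ico m (n'+1),
        (2/(1-2*lam)^2) * linDensity Λ (n'+1) * (4*lam^2)^(n'+1-k) := by
        apply Finset.sum_le_sum
        intro k hk
        have hkn : k < n'+1 := (Finset.mem_Ico.1 hk).2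
        have hsk := sideLen_pos hΛ k
        have hbk : 0 < (1-2*lam) * sideLen Λ k := by positivity
        calc ‖∫ y in cSquare Λ u k \ cSquare Λ u (k+1), ((z-y)⁻¹ - (z'-y)⁻¹) ∂μ‖
            ≤ (‖z - z'‖ / ((1-2*lam)*sideLen Λ k)^2)
                * (μ (cSquare Λ u k \ cSquare Λ u (k+1))).toReal :=
              key_norm_sub hμK (cSquare_measurableSet.diff cSquare_measurableSet) hbk
                (fun y h1 h2 => ⟨hsepk k hkn z hz y h1 h2, hsepk k hkn z' hz' y h1 h2⟩)
          _ ≤ (2 * sideLen Λ (n'+1) / ((1-2*lam)*sideLen Λ k)^2) * (1/4:ℝ)^k := by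
              apply mul_le_mul
              · exact div_le_div₀ (by have := sideLen_pos hΛ (n'+1); positivity)
                  (diam_bound hΛ hz hz') (by positivity) le_rfl
                
              · calc (μ (cSquare Λ u k \ cSquare Λ u (k+1))).toReal
                    ≤ (μ (cSquare Λ u k)).toReal :=
                      ENNReal.toReal_mono (measure_ne_top μ _) (measure_mono diff_subset)
                  _ = (1/4:ℝ)^k := muE_toReal hμQ u k
              · exact ENNReal.toReal_nonneg
              · have := sideLen_pos hΛ (n'+1); positivity
          _ ≤ (2/(1-2*lam)^2) * linDensity Λ (n'+1) * (4*lam^2)^(n'+1-k) :=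
              term_bound hΛ hΛ2 hlam hkn
    _ = (2/(1-2*lam)^2) * linDensity Λ (n'+1)
          * ∑ k ∈ Finset.Ico m (n'+1), (4*lam^2)^(n'+1-k) := by rw [← Finset.mul_sum]
    _ ≤ (2/(1-2*lam)^2) * linDensity Λ (n'+1) * (1 - 4*lam^2)⁻¹ := by
        apply mul_le_mul_of_nonneg_left (sum_pow_sub_le hr0 hr1)
        have h1 : 0 < linDensity Λ (n'+1) := by
          unfold linDensity; have := sideLen_pos hΛ (n'+1); positivity
        positivity
    _ = (2/((1 - 2*lam)^2 * (1 - 4*lam^2))) * linDensity Λ (n'+1) := by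
        have h1 : (0:ℝ) < 1 - 4*lam^2 := by linarith
        field_simp

lemma main_est (hmn : m < n) :
    ‖Srel μ (cSquare Λ u m) (cSquare Λ u (n+1)) - Srel μ (cSquare Λ u m) (cSquare Λ u n)‖
      ≤ (2/((1 - 2*lam)^2 * (1 - 4*lam^2)) + 1/(1 - 2*lam)) * linDensity Λ n := by
  have hc : (0:ℝ) < 1 - 2*lam := by linarith
  have hlam0 : (0:ℝ) < lam := lt_of_lt_of_le (by norm_num) (le_trans (hΛ 0) (hΛ2 0))
  have hr1 : 4*lam^2 < 1 := by nlinarith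
  have hsn := sideLen_pos hΛ n
  have hsn1 := sideLen_pos hΛ (n+1)
  have ha : 0 < linDensity Λ n := by unfold linDensity; positivity
  set Q := cSquare Λ u m with hQdef
  set Rt := cSquare Λ u n with hRtdef
  set R := cSquare Λ u (n+1) with hRdef
  have hRRt : R ⊆ Rt := cSquare_succ_subset hΛ hΛ2 hlam
  have hRtQ : Rt ⊆ Q := cSquare_antitone hΛ hΛ2 hlam hmn.le
  have hMQ : MeasurableSet Q := cSquare_measurableSet
  have hMRt : MeasurableSet Rt := cSquare_measurableSet
  have hMR : MeasurableSet R := cSquare_measurableSet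
  have htR : (μ R).toReal = (1/4:ℝ)^(n+1) := muE_toReal hμQ u (n+1)
  have htRt : (μ Rt).toReal = (1/4:ℝ)^n := muE_toReal hμQ u n
  have htR0 : (0:ℝ) < (μ R).toReal := by rw [htR]; positivity
  have htRt0 : (0:ℝ) < (μ Rt).toReal := by rw [htRt]; positivity
  set G : ℂ → ℂ := fun z => ∫ y in Q \ Rt, (z - y)⁻¹ ∂μ with hGdef
  set F : ℂ → ℂ := fun z => ∫ y in Q \ R, (z - y)⁻¹ ∂μ with hFdef
  set A : ℂ := ⨍ z in Rt, G z ∂μ with hAdef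
  have hSRt : Srel μ Q Rt = A := rfl
  have hSR : Srel μ Q R = ⨍ z in R, F z ∂μ := rfl
  -- separation-based integrability
  obtain ⟨n', rfl⟩ : ∃ n', n = n' + 1 := ⟨n - 1, by omega⟩
  have hbF : (0:ℝ) < (1-2*lam) * sideLen Λ (n'+1) := by positivity
  have hbG : (0:ℝ) < (1-2*lam) * sideLen Λ n' := by have := sideLen_pos hΛ n'; positivity
  have hsepF : ∀ z ∈ R, ∀ y ∈ Q \ R, y ∈ cantorK Λ →
      (1-2*lam) * sideLen Λ (n'+1) ≤ ‖z - y‖ := by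
    intro z hz y hy hyK
    exact sep_cantorK hΛ hΛ2 hlam (Nat.lt_succ_self (n'+1)) hz hyK hy.2
  have hsepG : ∀ z ∈ Rt, ∀ y ∈ Q \ Rt, y ∈ cantorK Λ →
      (1-2*lam) * sideLen Λ n' ≤ ‖z - y‖ := by
    intro z hz y hy hyK
    exact sep_cantorK hΛ hΛ2 hlam (Nat.lt_succ_self n') hz hyK hy.2
  have hintF : ∀ z ∈ R, IntegrableOn (fun y => (z - y)⁻¹) (Q \ R) μ := by
    intro z hz
    exact key_intOn hμK (hMQ.diff hMR) hbF (hsepF z hz)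
  have hintG : ∀ z ∈ Rt, IntegrableOn (fun y => (z - y)⁻¹) (Q \ Rt) μ := by
    intro z hz
    exact key_intOn hμK (hMQ.diff hMRt) hbG (hsepG z hz)
  -- split F = G + H on R
  have hFGH : ∀ z ∈ R, F z = G z + ∫ y in Rt \ R, (z - y)⁻¹ ∂μ := by
    intro z hz
    have hsplit : Q \ R = (Q \ Rt) ∪ (Rt \ R) :=
      (Set.diff_union_diff_cancel hRtQ hRRt).symm
    have hdisj : Disjoint (Q \ Rt) (Rt \ R) :=
      Set.disjoint_left.2 fun a ha hb => ha.2 hb.1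
    rw [hFdef]
    simp only []
    rw [hsplit, setIntegral_union hdisj (hMRt.diff hMR)
      ((hintF z hz).mono_set (by rw [hsplit]; exact Set.subset_union_left))
      ((hintF z hz).mono_set (by rw [hsplit]; exact Set.subset_union_right))]
  -- bound on H
  have hHb : ∀ z ∈ R, ‖∫ y in Rt \ R, (z - y)⁻¹ ∂μ‖ ≤ (1/(1-2*lam)) * linDensity Λ (n'+1) := by
    intro z hz
    have hsep : ∀ y ∈ Rt \ R, y ∈ cantorK Λ → (1-2*lam) * sideLen Λ (n'+1) ≤ ‖z - y‖ := by
      intro y hy hyK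
      exact sep_cantorK hΛ hΛ2 hlam (Nat.lt_succ_self (n'+1)) hz hyK hy.2
    calc ‖∫ y in Rt \ R, (z - y)⁻¹ ∂μ‖
        ≤ ((1-2*lam) * sideLen Λ (n'+1))⁻¹ * (μ (Rt \ R)).toReal :=
          key_norm hμK (hMRt.diff hMR) hbF hsep
      _ ≤ ((1-2*lam) * sideLen Λ (n'+1))⁻¹ * (1/4:ℝ)^(n'+1) := by
          apply mul_le_mul_of_nonneg_left _ (by positivity)
          calc (μ (Rt \ R)).toReal ≤ (μ Rt).toReal :=
                ENNReal.toReal_mono (measure_ne_top μ _) (measure_mono diff_subset)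
            _ = (1/4:ℝ)^(n'+1) := htRt
      _ = (1/(1-2*lam)) * linDensity Λ (n'+1) := by
          unfold linDensity
          rw [mul_inv]
          rw [div_pow, one_pow]
          field_simp
  -- strong measurability of G and F
  have huncur : StronglyMeasurable (Function.uncurry fun (z y : ℂ) => (z - y)⁻¹) :=
    ((measurable_fst.sub measurable_snd).inv).stronglyMeasurable
  have hGm : StronglyMeasurable G := huncur.integral_prod_right
  have hFm : StronglyMeasurable F := huncur.integral_prod_right
  -- integrability of G on Rt and F on R
  have hintGRt : IntegrableOn G Rt μ := by
    apply Measure.integrableOn_of_bounded (M := ((1-2*lam) * sideLen Λ n')⁻¹)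
      (measure_ne_top μ Rt) hGm.aestronglyMeasurable
    filter_upwards [ae_restrict_mem hMRt] with z hz
    calc ‖G z‖ ≤ ((1-2*lam) * sideLen Λ n')⁻¹ * (μ (Q \ Rt)).toReal :=
          key_norm hμK (hMQ.diff hMRt) hbG (hsepG z hz)
      _ ≤ ((1-2*lam) * sideLen Λ n')⁻¹ * 1 := by
          apply mul_le_mul_of_nonneg_left _ (by positivity)
          rw [← ENNReal.toReal_one]
          exact ENNReal.toReal_mono ENNReal.one_ne_top prob_le_one
      _ = ((1-2*lam) * sideLen Λ n')⁻¹ := mul_one _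
  have hintFR : IntegrableOn F R μ := by
    apply Measure.integrableOn_of_bounded (M := ((1-2*lam) * sideLen Λ (n'+1))⁻¹)
      (measure_ne_top μ R) hFm.aestronglyMeasurable
    filter_upwards [ae_restrict_mem hMR] with z hz
    calc ‖F z‖ ≤ ((1-2*lam) * sideLen Λ (n'+1))⁻¹ * (μ (Q \ R)).toReal :=
          key_norm hμK (hMQ.diff hMR) hbF (hsepF z hz)
      _ ≤ ((1-2*lam) * sideLen Λ (n'+1))⁻¹ * 1 := by
          apply mul_le_mul_of_nonneg_left _ (by positivity)
          rw [← ENNReal.toReal_one]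
          exact ENNReal.toReal_mono ENNReal.one_ne_top prob_le_one
      _ = ((1-2*lam) * sideLen Λ (n'+1))⁻¹ := mul_one _
  -- bound ‖G z - A‖ for z ∈ R
  have hGA : ∀ z ∈ R, ‖G z - A‖ ≤ (2/((1 - 2*lam)^2 * (1 - 4*lam^2))) * linDensity Λ (n'+1) := by
    intro z hz
    have hzRt : z ∈ Rt := hRRt hz
    have hconst : ∫ z' in Rt, (G z - G z') ∂μ = (μ Rt).toReal • G z - ∫ z' in Rt, G z' ∂μ := by
      rw [integral_sub (integrableOn_const (C := G z) (measure_ne_top μ Rt)) hintGRt,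
        setIntegral_const, measureReal_def]
    have hA' : G z - A = (μ Rt).toReal⁻¹ • ∫ z' in Rt, (G z - G z') ∂μ := by
      rw [hconst, smul_sub, hAdef, setAverage_eq, measureReal_def, smul_smul,
        inv_mul_cancel₀ htRt0.ne', one_smul]
    rw [hA', norm_smul]
    have hnorm : ‖∫ z' in Rt, (G z - G z') ∂μ‖
        ≤ ((2/((1 - 2*lam)^2 * (1 - 4*lam^2))) * linDensity Λ (n'+1)) * (μ Rt).toReal := by
      apply norm_setIntegral_le_of_norm_le_const_ae' (measure_lt_top μ Rt)
      apply Filter.Eventually.of_forall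
      intro z' hz'
      exact Gdiff_bound hΛ hΛ2 hlam hμK hμQ hmn hzRt hz'
    calc ‖(μ Rt).toReal⁻¹‖ * ‖∫ z' in Rt, (G z - G z') ∂μ‖
        ≤ (μ Rt).toReal⁻¹ * (((2/((1 - 2*lam)^2 * (1 - 4*lam^2))) * linDensity Λ (n'+1)) * (μ Rt).toReal) := by
          rw [Real.norm_eq_abs, abs_of_nonneg (by positivity)]
          exact mul_le_mul_of_nonneg_left hnorm (by positivity)
      _ = (2/((1 - 2*lam)^2 * (1 - 4*lam^2))) * linDensity Λ (n'+1) := by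
          field_simp
  -- combine: ‖F z - A‖ bound
  have hFA : ∀ z ∈ R, ‖F z - A‖
      ≤ (2/((1 - 2*lam)^2 * (1 - 4*lam^2)) + 1/(1 - 2*lam)) * linDensity Λ (n'+1) := by
    intro z hz
    have e : F z - A = (G z - A) + ∫ y in Rt \ R, (z - y)⁻¹ ∂μ := by
      rw [hFGH z hz]; ring
    rw [e]
    calc ‖(G z - A) + ∫ y in Rt \ R, (z - y)⁻¹ ∂μ‖
        ≤ ‖G z - A‖ + ‖∫ y in Rt \ R, (z - y)⁻¹ ∂μ‖ := norm_add_le _ _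
      _ ≤ (2/((1 - 2*lam)^2 * (1 - 4*lam^2))) * linDensity Λ (n'+1)
            + (1/(1-2*lam)) * linDensity Λ (n'+1) := add_le_add (hGA z hz) (hHb z hz)
      _ = (2/((1 - 2*lam)^2 * (1 - 4*lam^2)) + 1/(1 - 2*lam)) * linDensity Λ (n'+1) := by
          ring
  -- final assembly
  rw [hSR, hSRt, setAverage_eq, measureReal_def]
  have hconstR : (μ R).toReal⁻¹ • ∫ z in R, F z ∂μ - A
      = (μ R).toReal⁻¹ • ∫ z in R, (F z - A) ∂μ := by
    rw [integral_sub hintFR (integrableOn_const (C := A) (measure_ne_top μ R)),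
      setIntegral_const, measureReal_def, smul_sub, smul_smul, inv_mul_cancel₀ htR0.ne', one_smul]
  rw [hconstR, norm_smul]
  have hnorm : ‖∫ z in R, (F z - A) ∂μ‖
      ≤ ((2/((1 - 2*lam)^2 * (1 - 4*lam^2)) + 1/(1 - 2*lam)) * linDensity Λ (n'+1)) * (μ R).toReal := by
    apply norm_setIntegral_le_of_norm_le_const_ae' (measure_lt_top μ R)
    exact Filter.Eventually.of_forall hFA
  calc ‖(μ R).toReal⁻¹‖ * ‖∫ z in R, (F z - A) ∂μ‖
      ≤ (μ R).toReal⁻¹ * (((2/((1 - 2*lam)^2 * (1 - 4*lam^2)) + 1/(1 - 2*lam)) * linDensity Λ (n'+1)) * (μ R).toReal) := by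
        rw [Real.norm_eq_abs, abs_of_nonneg (by positivity)]
        exact mul_le_mul_of_nonneg_left hnorm (by positivity)
    _ = (2/((1 - 2*lam)^2 * (1 - 4*lam^2)) + 1/(1 - 2*lam)) * linDensity Λ (n'+1) := by
        field_simp

end Main

/-- `|S_{Q,R} - S_{Q,R̃}| ≤ C a_n` for squares `R ⊆ R̃ ⊆ Q` with `Q ∈ 𝒟_m`, `R̃ ∈ 𝒟_n`,
`R ∈ 𝒟_{n+1}` and `m < n`. -/
theorem relative_martingale_increment_bound (Λ : ℕ → ℝ) (lam : ℝ) (hlam : lam < 1 / 2)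
    (hΛ : ∀ n, 1 / 4 ≤ Λ n ∧ Λ n ≤ lam)
    (μ : Measure ℂ) [IsProbabilityMeasure μ]
    (hμK : μ (cantorK Λ) = 1)
    (hμQ : ∀ (w : ℕ → Bool × Bool) (n : ℕ), μ (cSquare Λ w n) = (4 : ℝ≥0∞)⁻¹ ^ n) :
    ∃ C : ℝ, 0 < C ∧ ∀ (m n : ℕ), m < n → ∀ Q ∈ genSq Λ m, ∀ Rt ∈ genSq Λ n,
      ∀ R ∈ genSq Λ (n + 1), R ⊆ Rt → Rt ⊆ Q →
        ‖Srel μ Q R - Srel μ Q Rt‖ ≤ C * linDensity Λ n := by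
  have hΛ1 : ∀ i, 1 / 4 ≤ Λ i := fun i => (hΛ i).1
  have hΛ2 : ∀ i, Λ i ≤ lam := fun i => (hΛ i).2
  have hlam0 : (0:ℝ) < lam := lt_of_lt_of_le (by norm_num) (le_trans (hΛ1 0) (hΛ2 0))
  have hc : (0:ℝ) < 1 - 2*lam := by linarith
  have hr1 : (0:ℝ) < 1 - 4*lam^2 := by nlinarith
  refine ⟨2/((1 - 2*lam)^2 * (1 - 4*lam^2)) + 1/(1 - 2*lam), by positivity, ?_⟩
  intro m n hmn Q hQ Rt hRt R hR hRRt hRtQ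
  obtain ⟨w, rfl⟩ := hQ
  obtain ⟨v, rfl⟩ := hRt
  obtain ⟨uu, rfl⟩ := hR
  have h1 : ∀ i, i < n → uu i = v i := word_align hΛ1 hΛ2 hlam hRRt (Nat.le_succ n)
  have h2 : ∀ i, i < m → v i = w i := word_align hΛ1 hΛ2 hlam hRtQ (le_of_lt hmn)
  have hRt' : cSquare Λ v n = cSquare Λ uu n := (cSquare_congr h1).symm
  have hQ' : cSquare Λ w m = cSquare Λ uu m := by
    refine (cSquare_congr ?_).symm
    exact fun i hi => (h1 i (lt_trans hi hmn)).trans (h2 i hi)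
  rw [hQ', hRt']
  exact main_est hΛ1 hΛ2 hlam hμK hμQ hmn
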